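/- Let M : A ⥤ Type be a functor, a an object of A, and S : J ⥤ Under a a functor from a small category J (a cone with vertex a). Then the following are equivalent: (i) the canonical map M.obj a → (S ⋙ Under.forget a ⋙ M).sections, sending m to the family j ↦ M.map ((S.obj j).hom) m, is a bijection; (ii) precomposition with S is a bijection from the set of functors L : Under a ⥤ El(M) with L ⋙ π_M = Under.forget a to the set of functors K : J ⥤ El(M) with K ⋙ π_M = S ⋙ Under.forget a. -/

import Mathlib

open CategoryTheory

section Aux

variable {A : Type*} [Category A] (M : A ⥤ Type*)

lemma eqToHom_val' {C : Type*} [Category C] {F : C ⥤ Type*} {x y : F.Elements} (p : x = y) :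
    (eqToHom p).val = eqToHom (congrArg Sigma.fst p) := by subst p; rfl

lemma map_map_eq_of_comp_eq {X Y Y' Z : A} (a : X ⟶ Y) (b : Y ⟶ Z) (c : X ⟶ Y') (d : Y' ⟶ Z)
    (h : a ≫ b = c ≫ d) (x : M.obj X) : M.map b (M.map a x) = M.map d (M.map c x) := by
  rw [← Functor.map_comp_apply, h, Functor.map_comp_apply]

lemma map_map_eq_self_of_comp_eq_id {X Y : A} (a : X ⟶ Y) (b : Y ⟶ X)
    (h : a ≫ b = 𝟙 X) (x : M.obj X) : M.map b (M.map a x) = x := by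
  rw [← Functor.map_comp_apply, h, Functor.map_id_apply]

lemma eqToHom_comp_comp_eq {X X' Y Y' : A} (f : X ⟶ Y) (p : X = X') (q : X' = X)
    (r : Y = Y') (t : Y' = Y) : f = eqToHom p ≫ (eqToHom q ≫ f ≫ eqToHom r) ≫ eqToHom t := by
  subst p r; simp

/-- Lift of `F` along the projection from `M.Elements` from a section of `F ⋙ M`. -/
def liftOfSections {C : Type*} [Category C] (F : C ⥤ A) (s : (F ⋙ M).sections) :
    C ⥤ M.Elements where
  obj c := ⟨F.obj c, s.1 c⟩
  map f := ⟨F.map f, s.2 f⟩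
  map_id c := by apply Subtype.ext; simp; rfl
  map_comp f g := by apply Subtype.ext; simp; rfl

/-- Lifts of `F` along the projection correspond to sections of `F ⋙ M`. -/
def liftEquiv {C : Type*} [Category C] (F : C ⥤ A) :
    {L : C ⥤ M.Elements // L ⋙ CategoryOfElements.π M = F} ≃ (F ⋙ M).sections where
  toFun L := ⟨fun c => M.map (eqToHom (Functor.congr_obj L.2 c)) (L.1.obj c).2, by
    intro c c' f
    have h := Functor.congr_hom L.2 f
    dsimp at h ⊢
    change (L.1.map f).1 = _ at h
    conv_rhs => rw [← (L.1.map f).2, h]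
    exact map_map_eq_of_comp_eq M _ _ _ _ (by simp) _⟩
  invFun s := ⟨liftOfSections M F s, rfl⟩
  left_inv := by
    rintro ⟨L, hL⟩
    apply Subtype.ext
    dsimp
    have hobj : ∀ c, (liftOfSections M F
        ⟨fun c => M.map (eqToHom (Functor.congr_obj hL c)) (L.obj c).snd, by
          intro c c' f
          have h := Functor.congr_hom hL f
          dsimp at h ⊢
          change (L.map f).1 = _ at h
          conv_rhs => rw [← (L.map f).2, h]
          exact map_map_eq_of_comp_eq M _ _ _ _ (by simp) _⟩).obj c = L.obj c := by
      intro c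
      refine Functor.Elements.ext _ _ (Functor.congr_obj hL c).symm ?_
      dsimp [liftOfSections]
      exact map_map_eq_self_of_comp_eq_id M _ _ ((eqToHom_trans _ _).trans (eqToHom_refl _ _)) _
    refine CategoryTheory.Functor.ext hobj (fun c c' f => ?_)
    · apply Subtype.ext
      have h := Functor.congr_hom hL f
      dsimp at h
      dsimp [liftOfSections]
      change _ = (eqToHom (hobj c)).val ≫ (L.map f).val ≫ (eqToHom (hobj c').symm).val
      rw [eqToHom_val', eqToHom_val']
      change _ = _ ≫ (CategoryOfElements.π M).map (L.map f) ≫ _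
      rw [h]
      exact eqToHom_comp_comp_eq _ _ _ _ _
  right_inv s := by
    apply Subtype.ext
    funext c
    simp [liftOfSections]
    exact M.map_id_apply _ _

/-- Sections of a functor on `Under a` composed with `M` correspond to `M.obj a`. -/
def underSectionsEquiv (a : A) : (Under.forget a ⋙ M).sections ≃ M.obj a where
  toFun s := s.1 (Under.mk (𝟙 a))
  invFun m := ⟨fun x => M.map x.hom m, by
    intro x y f
    change M.map f.right (M.map x.hom m) = M.map y.hom m
    rw [← Functor.map_comp_apply, Under.w]⟩
  left_inv s := by
    apply Subtype.ext
    funext x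
    have := s.2 (show Under.mk (𝟙 a) ⟶ x from Under.homMk x.hom (by simp))
    dsimp at this ⊢
    exact this
  right_inv m := by simp

end Aux

/-- The canonical map from `M.obj a` to the sections of `S ⋙ Under.forget a ⋙ M`,
for a cone `S : J ⥤ Under a` with vertex `a`, sending `m` to the family
`j ↦ M.map (S.obj j).hom m`. -/
def canonicalSectionsMap {A : Type*} [Category A] {J : Type*} [SmallCategory J]
    (M : A ⥤ Type*) {a : A} (S : J ⥤ Under a) (m : M.obj a) :
    (S ⋙ Under.forget a ⋙ M).sections :=
  ⟨fun j => M.map (S.obj j).hom m, by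
    intro j j' f
    change M.map (S.map f).right (M.map (S.obj j).hom m) = M.map (S.obj j').hom m
    rw [← Functor.map_comp_apply, Under.w]⟩

/-- `M` satisfies the limit-cone condition at a cone `S` with vertex `a` if and only
if precomposition with `S` is a bijection from lifts of `Under.forget a` to lifts of
`S ⋙ Under.forget a` along the projection from the category of elements of `M`. -/
theorem isLimitCone_iff_liftsCones {A : Type*} [Category A] {J : Type*} [SmallCategory J]
    (M : A ⥤ Type*) (a : A) (S : J ⥤ Under a) :
    Function.Bijective (canonicalSectionsMap M S) ↔
      Function.Bijective
        (fun (L : {L : Under a ⥤ M.Elements // L ⋙ CategoryOfElements.π M = Under.forget a}) =>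
          (⟨S ⋙ L.1, by rw [Functor.assoc, L.2]⟩ :
            {K : J ⥤ M.Elements // K ⋙ CategoryOfElements.π M = S ⋙ Under.forget a})) := by
  set restrict : (Under.forget a ⋙ M).sections → (S ⋙ Under.forget a ⋙ M).sections :=
    fun s => ⟨fun j => s.1 (S.obj j), fun f => s.2 (S.map f)⟩ with hres
  have h1 : canonicalSectionsMap M S = restrict ∘ (underSectionsEquiv M a).symm := rfl
  have h2 : (fun (L : {L : Under a ⥤ M.Elements // L ⋙ CategoryOfElements.π M = Under.forget a}) =>
          (⟨S ⋙ L.1, by rw [Functor.assoc, L.2]⟩ :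
            {K : J ⥤ M.Elements // K ⋙ CategoryOfElements.π M = S ⋙ Under.forget a}))
      = (liftEquiv M (S ⋙ Under.forget a)).symm ∘ restrict ∘ (liftEquiv M (Under.forget a)) := by
    funext L
    apply (liftEquiv M (S ⋙ Under.forget a)).injective
    simp only [Function.comp_apply, Equiv.apply_symm_apply]
    rfl
  rw [h1, h2]
  simp only [Equiv.comp_bijective, Equiv.bijective_comp]
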